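/- Let F₂ be a k×p₂ real matrix of rank p₂, Σγ a positive semidefinite p₂×p₂ real matrix, Σε a positive definite k×k real matrix, V = F₂ Σγ F₂ᵀ + Σε, and M₂ = F₂ᵀ V⁻¹ F₂. Then for every vector f ∈ ℝ^{p₂}, fᵀ M₂⁻¹ f = fᵀ (F₂ᵀ Σε⁻¹ F₂)⁻¹ f + fᵀ Σγ f. -/

import Mathlib

open Matrix

lemma aux_mulVec_inj {k p₂ : ℕ} (F₂ : Matrix (Fin k) (Fin p₂) ℝ) (hF : F₂.rank = p₂) :
    Function.Injective F₂.mulVec := by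
  rw [← Matrix.coe_mulVecLin, ← LinearMap.ker_eq_bot]
  have h := LinearMap.finrank_range_add_finrank_ker F₂.mulVecLin
  rw [show Module.finrank ℝ (Fin p₂ → ℝ) = p₂ by simp] at h
  have hr : Module.finrank ℝ (LinearMap.range F₂.mulVecLin) = p₂ := hF
  rw [hr] at h
  exact Submodule.finrank_eq_zero.1 (by omega)

lemma aux_posdef_A {k p₂ : ℕ} (F₂ : Matrix (Fin k) (Fin p₂) ℝ)
    (Sε : Matrix (Fin k) (Fin k) ℝ) (hF : F₂.rank = p₂) (hε : Sε.PosDef) :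
    (F₂ᵀ * Sε⁻¹ * F₂).PosDef := by
  have hεi := hε.inv
  rw [Matrix.posDef_iff_dotProduct_mulVec]
  constructor
  · have h1 : F₂ᵀ = F₂ᴴ := (Matrix.conjTranspose_eq_transpose_of_trivial F₂).symm
    rw [h1]
    exact Matrix.isHermitian_conjTranspose_mul_mul F₂ hεi.isHermitian
  · intro x hx
    have hFx : F₂ *ᵥ x ≠ 0 := by
      intro hc
      exact hx (aux_mulVec_inj F₂ hF (by simpa using hc))
    have := hεi.dotProduct_mulVec_pos hFx
    have e1 : (F₂ᵀ * Sε⁻¹ * F₂) *ᵥ x = F₂ᵀ *ᵥ (Sε⁻¹ *ᵥ (F₂ *ᵥ x)) := by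
      simp [Matrix.mulVec_mulVec, Matrix.mul_assoc]
    rw [e1, Matrix.dotProduct_mulVec, Matrix.vecMul_transpose]
    exact this

/-- Decomposition of the marginal `c`-criterion in the mixed effects model in
the time variable: `fᵀ M₂⁻¹ f = fᵀ (F₂ᵀ Sε⁻¹ F₂)⁻¹ f + fᵀ Sγ f`. -/
theorem c_criterion_decomposition {k p₂ : ℕ} (F₂ : Matrix (Fin k) (Fin p₂) ℝ)
    (Sγ : Matrix (Fin p₂) (Fin p₂) ℝ) (Sε : Matrix (Fin k) (Fin k) ℝ)
    (hF : F₂.rank = p₂) (hγ : Sγ.PosSemidef) (hε : Sε.PosDef)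
    (V : Matrix (Fin k) (Fin k) ℝ) (hV : V = F₂ * Sγ * F₂ᵀ + Sε)
    (M₂ : Matrix (Fin p₂) (Fin p₂) ℝ) (hM : M₂ = F₂ᵀ * V⁻¹ * F₂) :
    ∀ f : Fin p₂ → ℝ,
      f ⬝ᵥ (M₂⁻¹ *ᵥ f) = f ⬝ᵥ ((F₂ᵀ * Sε⁻¹ * F₂)⁻¹ *ᵥ f) + f ⬝ᵥ (Sγ *ᵥ f) := by
  intro f
  set A := F₂ᵀ * Sε⁻¹ * F₂ with hAdef
  have hApd : A.PosDef := aux_posdef_A F₂ Sε hF hε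
  have hAu : IsUnit A.det := hApd.det_pos.ne'.isUnit
  have hAinv : A * A⁻¹ = 1 := Matrix.mul_nonsing_inv A hAu
  have hAinv' : A⁻¹ * A = 1 := Matrix.nonsing_inv_mul A hAu
  have hVpd : V.PosDef := by
    rw [hV]
    have hpsd : (F₂ * Sγ * F₂ᵀ).PosSemidef := by
      have := hγ.mul_mul_conjTranspose_same F₂
      rwa [Matrix.conjTranspose_eq_transpose_of_trivial] at this
    exact Matrix.PosDef.posSemidef_add hpsd hε
  have hVu : IsUnit V.det := hVpd.det_pos.ne'.isUnit
  set C := A⁻¹ + Sγ with hCdef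
  have hCpd : C.PosDef := hApd.inv.add_posSemidef hγ
  have hCu : IsUnit C.det := hCpd.det_pos.ne'.isUnit
  set B := (1 : Matrix (Fin p₂) (Fin p₂) ℝ) + Sγ * A with hBdef
  have hBC : B = C * A := by
    rw [hBdef, hCdef, Matrix.add_mul, hAinv']
  have hBu : IsUnit B.det := by
    rw [hBC, Matrix.det_mul]
    exact hCu.mul hAu
  have hε1 : Sε * Sε⁻¹ = 1 := Matrix.mul_nonsing_inv _ hε.det_pos.ne'.isUnit
  have hkey : V * (Sε⁻¹ * F₂) = F₂ * B := by
    rw [hV, hBdef]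
    simp only [Matrix.add_mul, Matrix.mul_add, Matrix.mul_one, Matrix.mul_assoc]
    rw [← Matrix.mul_assoc Sε, hε1, Matrix.one_mul]
    rw [add_comm, hAdef]
    simp only [Matrix.mul_assoc]
  have hkey2 : V⁻¹ * F₂ = Sε⁻¹ * F₂ * B⁻¹ := by
    have h1 : Sε⁻¹ * F₂ = V⁻¹ * (F₂ * B) := by
      rw [← hkey, ← Matrix.mul_assoc, Matrix.nonsing_inv_mul V hVu, Matrix.one_mul]
    rw [h1, Matrix.mul_assoc, Matrix.mul_assoc, Matrix.mul_nonsing_inv B hBu,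
      Matrix.mul_one]
  have hM2 : M₂ = A * B⁻¹ := by
    rw [hM, Matrix.mul_assoc, hkey2, hAdef]
    simp only [Matrix.mul_assoc]
  have hright : M₂ * C = 1 := by
    have h2 : A * (A⁻¹ * C⁻¹) * C = 1 := by
      rw [← Matrix.mul_assoc A, hAinv, Matrix.one_mul, Matrix.nonsing_inv_mul C hCu]
    rw [hM2, hBC, Matrix.mul_inv_rev]
    exact h2
  have hMinv : M₂⁻¹ = C := Matrix.inv_eq_right_inv hright
  rw [hMinv, hCdef, Matrix.add_mulVec, dotProduct_add]
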